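/- arXiv:2409.17449 — 2 statements merged into one kernel-verified Lean document; each statement's English description precedes it below -/
import Mathlib

section
/- The q-Chu–Vandermonde identity: for a nonnegative integer n and parameters b, c, the terminating basic hypergeometric series ₂φ₁(q^{-n}, b; c; q, cq^n/b) = (c/b; q)_n / (c; q)_n, where ₂φ₁(a₁,a₂;b₁;q,z) = ∑_{m=0}^{∞} (a₁;q)_m (a₂;q)_m / ((q;q)_m (b₁;q)_m) · z^m. -/
open Finset

noncomputable section

abbrev F := RatFunc ℚ

noncomputable def q : F := RatFunc.X

/-- Gaussian binomial coefficient `binom(n,m)_x`, equal to 0 when `m < 0` or `m > n`. -/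
noncomputable def gb (x : F) (n m : ℤ) : F :=
  if 0 ≤ m ∧ m ≤ n then
    (∏ j ∈ Finset.Icc (0:ℤ) (m-1), (1 - x ^ (n - j))) /
    (∏ j ∈ Finset.Icc (0:ℤ) (m-1), (1 - x ^ (j + 1)))
  else 0

/-- q-Pochhammer symbol `(x; y)_m`. -/
noncomputable def poch (x y : F) (m : ℤ) : F :=
  ∏ j ∈ Finset.Icc (0:ℤ) (m-1), (1 - x * y ^ j)

/-! ### Auxiliary development -/

/-- natural-index q-Pochhammer -/
noncomputable def pp (x : F) (m : ℕ) : F := ∏ j ∈ Finset.range m, (1 - x * q ^ j)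

lemma q_ne_zero : q ≠ 0 := by
  simpa [q] using RatFunc.X_ne_zero (K := ℚ)

lemma q_pow_inj {a b : ℕ} (h : (q:F) ^ a = q ^ b) : a = b := by
  have h' : (algebraMap (Polynomial ℚ) F) (Polynomial.X ^ a)
      = (algebraMap (Polynomial ℚ) F) (Polynomial.X ^ b) := by
    rw [map_pow, map_pow, RatFunc.algebraMap_X]
    exact h
  have h2 : (Polynomial.X ^ a : Polynomial ℚ) = Polynomial.X ^ b :=
    RatFunc.algebraMap_injective ℚ h'
  have h3 := congrArg Polynomial.natDegree h2
  simpa using h3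

lemma one_sub_q_pow_ne {k : ℕ} (hk : k ≠ 0) : (1:F) - q ^ k ≠ 0 := by
  intro h
  have : (q:F) ^ k = q ^ 0 := by
    have : (q:F) ^ k = 1 := by linear_combination -h
    simpa using this
  exact hk (q_pow_inj this)

lemma pp_succ (x : F) (m : ℕ) : pp x (m+1) = pp x m * (1 - x * q ^ m) :=
  Finset.prod_range_succ _ _

lemma pp_shift (x : F) (m : ℕ) : pp x (m+1) = (1 - x) * pp (x * q) m := by
  rw [pp, Finset.prod_range_succ', pp]
  simp only [pow_zero, mul_one]
  rw [mul_comm]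
  congr 1
  refine Finset.prod_congr rfl fun j _ => ?_
  ring

lemma pp_q_ne_zero (m : ℕ) : pp q m ≠ 0 := by
  rw [pp]
  refine Finset.prod_ne_zero_iff.2 fun j _ => ?_
  have : (1:F) - q ^ (j+1) ≠ 0 := one_sub_q_pow_ne (Nat.succ_ne_zero j)
  simpa [pow_succ, pow_succ', mul_comm] using this

lemma pp_c_factor_ne {c : F} {n : ℕ} (hc : pp c n ≠ 0) {j : ℕ} (hj : j < n) :
    (1:F) - c * q ^ j ≠ 0 := by
  rw [pp] at hc
  intro h
  exact hc (Finset.prod_eq_zero (Finset.mem_range.2 hj) h)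

lemma pp_c_ne_of_le {c : F} {n : ℕ} (hc : pp c n ≠ 0) {m : ℕ} (hm : m ≤ n) :
    pp c m ≠ 0 := by
  rw [pp]
  exact Finset.prod_ne_zero_iff.2 fun j hj =>
    pp_c_factor_ne hc (lt_of_lt_of_le (Finset.mem_range.1 hj) hm)

/-- the terms of the sum -/
noncomputable def tt (b c : F) (n m : ℕ) : F :=
  pp ((q^n)⁻¹) m * pp b m / (pp q m * pp c m) * (c * q^n / b) ^ m

/-- the telescoping certificate -/
noncomputable def Gf (b c : F) (n : ℕ) : ℕ → F
  | 0 => 0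
  | (m+1) => pp ((q^n)⁻¹) m * pp b (m+1) / (pp q m * pp c m) * (c * q^n / b) ^ (m+1)

lemma pp_inv_top (n : ℕ) : pp ((q^n)⁻¹) (n+1) = 0 := by
  rw [pp]
  refine Finset.prod_eq_zero (Finset.mem_range.2 (Nat.lt_succ_self n)) ?_
  rw [inv_mul_cancel₀ (pow_ne_zero n q_ne_zero)]
  ring

lemma tt_top (b c : F) (n : ℕ) : tt b c n (n+1) = 0 := by
  rw [tt, pp_inv_top]
  ring

lemma Gf_top (b c : F) (n : ℕ) : Gf b c n (n+2) = 0 := by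
  show pp ((q^n)⁻¹) (n+1) * _ / _ * _ = 0
  rw [pp_inv_top]
  ring

set_option maxHeartbeats 2000000 in
lemma key (b c : F) (n : ℕ) (hb : b ≠ 0) (hc : ∀ j ≤ n, (1:F) - c * q ^ j ≠ 0)
    (hq : ∀ m : ℕ, pp q m ≠ 0) (hcp : ∀ m ≤ n, pp c m ≠ 0) :
    ∀ m ≤ n + 1,
      (1 - c * q^n) * tt b c (n+1) m - (1 - (c/b) * q^n) * tt b c n m
        = Gf b c n (m+1) - Gf b c n m := by
  intro m hm
  match m with
  | 0 =>
      simp only [tt, Gf, pp]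
      simp only [Finset.range_zero, Finset.prod_empty, Finset.range_one,
        Finset.prod_range_succ, pow_zero, pow_one, mul_one, one_mul]
      field_simp
      linear_combination (c * q ^ n * b - c * q ^ n) * mul_inv_cancel₀ hb
  | (mm+1) =>
      have hmm : mm ≤ n := Nat.lt_succ_iff.1 hm
      have hNq : (q:F) ^ n ≠ 0 := pow_ne_zero n q_ne_zero
      -- rewrite the (n+1)-Pochhammer via the shift lemma
      have hshift : pp ((q^(n+1))⁻¹) (mm+1)
          = (1 - (q^(n+1))⁻¹) * pp ((q^n)⁻¹) mm := by
        have h1 : ((q:F)^(n+1))⁻¹ * q = (q^n)⁻¹ := by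
          rw [pow_succ, mul_inv, mul_assoc, inv_mul_cancel₀ q_ne_zero, mul_one]
        rw [pp_shift, h1]
      have hq1 : (1:F) - q * q ^ mm ≠ 0 := by
        have := one_sub_q_pow_ne (Nat.succ_ne_zero mm)
        simpa [pow_succ, mul_comm] using this
      have hc1 : (1:F) - c * q ^ mm ≠ 0 := hc mm hmm
      have hpq : pp q mm ≠ 0 := hq mm
      have hpc : pp c mm ≠ 0 := hcp mm hmm
      show (1 - c * q^n) * tt b c (n+1) (mm+1) - (1 - (c/b) * q^n) * tt b c n (mm+1)
          = (pp ((q^n)⁻¹) (mm+1) * pp b (mm+2) / (pp q (mm+1) * pp c (mm+1))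
              * (c * q^n / b) ^ (mm+2))
            - (pp ((q^n)⁻¹) mm * pp b (mm+1) / (pp q mm * pp c mm)
              * (c * q^n / b) ^ (mm+1))
      rw [tt, tt, hshift, pp_succ ((q^n)⁻¹) mm, pp_succ b (mm+1), pp_succ b mm,
        pp_succ q mm, pp_succ c mm]
      have hz1 : (c * q^(n+1) / b) ^ (mm+1) = (c * q^n / b) ^ (mm+1) * (q * q ^ mm) := by
        rw [show c * q^(n+1) / b = (c * q^n / b) * q by rw [pow_succ]; ring]
        rw [mul_pow, pow_succ]
        ring
      have hz2 : (c * q^n / b) ^ (mm+2) = (c * q^n / b) ^ (mm+1) * (c * q^n / b) := by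
        rw [pow_succ]
      rw [hz1, hz2]
      rw [show ((q:F)^(n+1))⁻¹ = (q^n * q)⁻¹ by rw [pow_succ]]
      simp only [pow_succ q]
      set Pa := pp ((q^n)⁻¹) mm with hPa
      set Pb := pp b mm with hPb
      set Pq := pp q mm with hPq2
      set Pc := pp c mm with hPc2
      set M := (q:F) ^ mm with hM
      set N := (q:F) ^ n with hN
      set Z := (c * N / b) ^ (mm+1) with hZ
      clear_value Pa Pb Pq Pc M N Z
      rw [show (1 - (N * q)⁻¹ : F) = (N*q-1)/(N*q) by
          rw [sub_div, div_self (mul_ne_zero hNq q_ne_zero), div_eq_mul_inv, one_mul],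
        show (1 - N⁻¹ * M : F) = (N-M)/N by
          rw [sub_div, div_self hNq, div_eq_mul_inv]; ring]
      have hqz : q ≠ 0 := q_ne_zero
      set D := Pq * (1 - q * M) * (Pc * (1 - c * M)) with hDdef
      have hD : D ≠ 0 := mul_ne_zero (mul_ne_zero hpq hq1) (mul_ne_zero hpc hc1)
      have hPqPc : Pq * Pc ≠ 0 := mul_ne_zero hpq hpc
      clear hz1 hz2 hshift hPa hPb hPc2 hPq2 hM hN hZ hc hq hcp hm hmm
      field_simp
      ring

lemma main (b c : F) (hb : b ≠ 0) :
    ∀ n : ℕ, pp c n ≠ 0 →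
      ∑ m ∈ Finset.range (n+1), tt b c n m = pp (c/b) n / pp c n := by
  intro n
  induction n with
  | zero =>
      intro _
      simp [tt, pp]
  | succ n ih =>
      intro hc
      have hcn : pp c n ≠ 0 := pp_c_ne_of_le hc (Nat.le_succ n)
      have hfac : ∀ j ≤ n, (1:F) - c * q ^ j ≠ 0 := fun j hj =>
        pp_c_factor_ne hc (Nat.lt_succ_of_le hj)
      have hcp : ∀ m ≤ n, pp c m ≠ 0 := fun m hm =>
        pp_c_ne_of_le hc (le_trans hm (Nat.le_succ n))
      -- telescoping sum
      have htel : ∑ m ∈ Finset.range (n+2),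
          ((1 - c * q^n) * tt b c (n+1) m - (1 - (c/b) * q^n) * tt b c n m) = 0 := by
        have : ∑ m ∈ Finset.range (n+2),
            ((1 - c * q^n) * tt b c (n+1) m - (1 - (c/b) * q^n) * tt b c n m)
            = ∑ m ∈ Finset.range (n+2), (Gf b c n (m+1) - Gf b c n m) := by
          refine Finset.sum_congr rfl fun m hm => ?_
          exact key b c n hb hfac pp_q_ne_zero hcp m (Nat.lt_succ_iff.1 (Finset.mem_range.1 hm))
        rw [this, Finset.sum_range_sub (Gf b c n), Gf_top]
        simp [Gf]
      rw [Finset.sum_sub_distrib, ← Finset.mul_sum, ← Finset.mul_sum, sub_eq_zero] at htel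
      have hS : ∑ m ∈ Finset.range (n+2), tt b c n m
          = pp (c/b) n / pp c n := by
        rw [Finset.sum_range_succ, tt_top, add_zero, ih hcn]
      rw [hS] at htel
      -- now solve for the goal
      have hcqn : (1:F) - c * q ^ n ≠ 0 := pp_c_factor_ne hc (Nat.lt_succ_self n)
      have hgoal : ∑ m ∈ Finset.range (n+2), tt b c (n+1) m
          = (1 - (c/b) * q^n) * (pp (c/b) n / pp c n) / (1 - c * q^n) := by
        field_simp at htel ⊢
        linear_combination htel
      rw [hgoal, pp_succ (c/b) n, pp_succ c n]
      field_simp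

lemma icc_eq_map (k : ℕ) :
    Finset.Icc (0:ℤ) ((k:ℤ)-1)
      = Finset.map ⟨((↑·) : ℕ → ℤ), Nat.cast_injective⟩ (Finset.range k) := by
  ext x
  simp only [Finset.mem_Icc, Finset.mem_map, Finset.mem_range, Function.Embedding.coeFn_mk]
  constructor
  · rintro ⟨h0, h1⟩
    exact ⟨x.toNat, by omega, by omega⟩
  · rintro ⟨j, hj, rfl⟩
    omega

lemma poch_natCast (x : F) (k : ℕ) : poch x q (k:ℤ) = pp x k := by
  rw [poch, pp, icc_eq_map, Finset.prod_map]
  refine Finset.prod_congr rfl fun j _ => ?_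
  simp [zpow_natCast]

/-- The q-Chu–Vandermonde identity. -/
theorem stmt5 (n : ℕ) (b c : F) (hb : b ≠ 0) (hc : poch c q (n:ℤ) ≠ 0) :
    ∑ m ∈ Finset.Icc (0:ℤ) (n:ℤ),
      poch (q^(-(n:ℤ))) q m * poch b q m / (poch q q m * poch c q m) *
        (c * q^(n:ℤ) / b)^m
    = poch (c/b) q (n:ℤ) / poch c q (n:ℤ) := by
  have hc' : pp c n ≠ 0 := by rwa [poch_natCast] at hc
  have hmap : Finset.Icc (0:ℤ) (n:ℤ)
      = Finset.map ⟨((↑·) : ℕ → ℤ), Nat.cast_injective⟩ (Finset.range (n+1)) := by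
    have := icc_eq_map (n+1)
    simpa using this
  rw [hmap, Finset.sum_map]
  have hqn : (q:F) ^ (-(n:ℤ)) = ((q:F)^n)⁻¹ := by
    rw [zpow_neg, zpow_natCast]
  have hstep : ∑ m ∈ Finset.range (n+1),
      poch (q^(-(n:ℤ))) q (m:ℤ) * poch b q (m:ℤ) / (poch q q (m:ℤ) * poch c q (m:ℤ)) *
        (c * q^(n:ℤ) / b) ^ (m:ℤ)
      = ∑ m ∈ Finset.range (n+1), tt b c n m := by
    refine Finset.sum_congr rfl fun m _ => ?_
    rw [poch_natCast, poch_natCast, poch_natCast, poch_natCast, hqn,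
      zpow_natCast q n, zpow_natCast, tt]
  simp only [Function.Embedding.coeFn_mk] at *
  rw [hstep, main b c hb n hc', poch_natCast, poch_natCast]

end
end

section
/- For even n ≥ 2 and 1 ≤ k ≤ n/2, the rational function ((q^{(n-1)k}-1)/(q-1)) · ∏_{j=k+1}^{n/2} (q^{2j}-1)/(q^{2j-2k}-1) is a polynomial in q with nonnegative integer coefficients. -/
open Finset

noncomputable section

/-- Gaussian binomial in `X^2`, by Pascal recursion. -/
noncomputable def gp2 : ℕ → ℕ → Polynomial ℤ
  | _, 0 => 1
  | 0, _+1 => 0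
  | n+1, m+1 => gp2 n m + gp2 n (m+1) * Polynomial.X ^ (2*m+2)

lemma gp2_coeff_nonneg : ∀ n m i, 0 ≤ (gp2 n m).coeff i := by
  intro n
  induction n with
  | zero =>
    intro m i
    cases m with
    | zero => simp [gp2, Polynomial.coeff_one]; positivity
    | succ m => simp [gp2]
  | succ n ih =>
    intro m i
    cases m with
    | zero => simp [gp2, Polynomial.coeff_one]; positivity
    | succ m =>
      rw [gp2, Polynomial.coeff_add, Polynomial.coeff_mul_X_pow']
      have := ih m i
      split
      · have := ih (m+1) (i - (2*m+2)); linarith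
      · simpa using this

lemma gp2_eq_zero : ∀ n m, n < m → gp2 n m = 0 := by
  intro n
  induction n with
  | zero => intro m h; cases m with
    | zero => omega
    | succ m => simp [gp2]
  | succ n ih =>
    intro m h
    cases m with
    | zero => omega
    | succ m => rw [gp2, ih m (by omega), ih (m+1) (by omega)]; simp

lemma gp2_self : ∀ n, gp2 n n = 1 := by
  intro n
  induction n with
  | zero => rfl
  | succ n ih => rw [gp2, ih, gp2_eq_zero n (n+1) (by omega)]; simp

noncomputable def xx : F := q ^ 2

noncomputable def fac (n : ℕ) : F := ∏ j ∈ Finset.Ioc 0 n, (xx ^ j - 1)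

lemma q_pow_ne_one {t : ℕ} (ht : t ≠ 0) : (q : F) ^ t ≠ 1 := by
  intro h
  have : (Polynomial.X : Polynomial ℚ) ^ t = 1 := by
    apply RatFunc.algebraMap_injective ℚ
    simpa [q, map_pow, RatFunc.algebraMap_X] using h
  have := congrArg Polynomial.natDegree this
  simp [Polynomial.natDegree_X_pow] at this
  exact ht this

lemma xx_pow_sub_one_ne {t : ℕ} (ht : t ≠ 0) : (xx : F) ^ t - 1 ≠ 0 := by
  rw [sub_ne_zero, xx, ← pow_mul]
  exact q_pow_ne_one (by omega)

lemma fac_ne_zero (n : ℕ) : fac n ≠ 0 := by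
  apply Finset.prod_ne_zero_iff.2
  intro j hj
  exact xx_pow_sub_one_ne (by simp at hj; omega)

lemma fac_succ (n : ℕ) : fac (n+1) = fac n * (xx ^ (n+1) - 1) := by
  rw [fac, Finset.prod_Ioc_succ_top (Nat.zero_le n)]; rfl

lemma key_s18 : ∀ n m : ℕ, m ≤ n →
    (Polynomial.aeval (q : F) (gp2 n m)) * (fac m * fac (n-m)) = fac n := by
  intro n
  induction n with
  | zero =>
    intro m hm
    interval_cases m
    simp [gp2, fac]
  | succ n ih =>
    intro m hm
    cases m with
    | zero => simp [gp2, fac]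
    | succ m =>
      rcases Nat.lt_or_ge m n with hmn | hmn
      · -- m + 1 ≤ n
        have e1 := ih m (by omega)
        have e2 := ih (m+1) (by omega)
        rw [gp2, map_add, map_mul, map_pow, Polynomial.aeval_X]
        have hnm : n - m = (n - (m+1)) + 1 := by omega
        have hnm1 : (n+1) - (m+1) = (n - (m+1)) + 1 := by omega
        rw [hnm, fac_succ] at e1
        rw [fac_succ] at e2 ⊢
        rw [hnm1, fac_succ]
        have e4 : (q:F) ^ (2*m+2) = xx ^ (m+1) := by rw [xx, ← pow_mul]; ring_nf
        have e3 : (xx:F) ^ (m+1) * xx ^ (n - (m+1) + 1) = xx ^ (n+1) := by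
          rw [← pow_add]; congr 1; omega
        rw [e4]
        linear_combination (xx^(m+1)-1) * e1 + xx^(m+1)*(xx^(n-(m+1)+1)-1) * e2 + fac n * e3 - fac_succ n
      · -- m = n
        have hm' : m = n := by omega
        subst hm'
        rw [gp2, gp2_self, gp2_eq_zero m (m+1) (by omega)]
        simp [fac]

/-- The modified stringy E-function of `Pf(2k,n)` (even `n`) is a polynomial in `q`
with nonnegative integer coefficients. -/
theorem stmt18 (n k : ℤ) (hn : Even n) (hn2 : 2 ≤ n) (hk1 : 1 ≤ k) (hk : k ≤ n/2) :
    ∃ P : Polynomial ℤ, (∀ m, 0 ≤ P.coeff m) ∧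
      ((q^((n-1)*k)-1)/(q-1)) *
          ∏ j ∈ Finset.Icc (k+1) (n/2), (q^(2*j)-1)/(q^(2*j-2*k)-1)
        = algebraMap (Polynomial ℚ) F (P.map (Int.castRingHom ℚ)) := by
  set K := k.toNat with hKdef
  set M := (n/2).toNat with hMdef
  set T := ((n-1)*k).toNat with hTdef
  have hkK : (K : ℤ) = k := Int.toNat_of_nonneg (by omega)
  have hmM : (M : ℤ) = n/2 := Int.toNat_of_nonneg (by omega)
  have htT : (T : ℤ) = (n-1)*k := Int.toNat_of_nonneg (by nlinarith)
  have hK1 : 1 ≤ K := by omega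
  have hKM : K ≤ M := by omega
  have hT0 : T ≠ 0 := by
    have hpos : (0:ℤ) < (n-1)*k := mul_pos (by omega) (by omega)
    intro h; rw [h] at htT; exact hpos.ne' htT.symm
  refine ⟨(∑ i ∈ Finset.range T, Polynomial.X ^ i) * gp2 M K, ?_, ?_⟩
  · intro m
    rw [Polynomial.coeff_mul]
    apply Finset.sum_nonneg
    intro p _
    apply mul_nonneg _ (gp2_coeff_nonneg M K p.2)
    rw [Polynomial.finset_sum_coeff]
    apply Finset.sum_nonneg
    intro i _
    rw [Polynomial.coeff_X_pow]
    positivity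
  · -- translate the RHS
    have hmap : ∀ p : Polynomial ℤ,
        algebraMap (Polynomial ℚ) F (p.map (Int.castRingHom ℚ)) = Polynomial.aeval (q:F) p := by
      intro p
      have h2 : (algebraMap (Polynomial ℚ) F) = Polynomial.eval₂RingHom (algebraMap ℚ F) (q:F) := by
        exact Polynomial.ringHom_ext' (Subsingleton.elim _ _) (by simp [q, RatFunc.algebraMap_X])
      rw [h2, Polynomial.coe_eval₂RingHom, Polynomial.eval₂_map, Polynomial.aeval_def]
      congr 1; exact Subsingleton.elim _ _
    rw [hmap, map_mul]
    -- geometric part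
    have hq1 : (q : F) ≠ 1 := by
      have := q_pow_ne_one (t := 1) one_ne_zero; simpa using this
    have hgeom : Polynomial.aeval (q:F) (∑ i ∈ Finset.range T, (Polynomial.X : Polynomial ℤ) ^ i)
        = (q ^ T - 1)/(q - 1) := by
      rw [map_sum]
      simp only [map_pow, Polynomial.aeval_X]
      exact geom_sum_eq hq1 T
    have hzT : (q:F) ^ ((n-1)*k) = q ^ T := by
      rw [← htT, zpow_natCast]
    -- product part
    have hq2 : ∀ j : ℤ, 0 ≤ j → (q:F) ^ (2*j) = xx ^ j.toNat := by
      intro j hj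
      have h : (2*j) = ((2*j.toNat : ℕ) : ℤ) := by push_cast; omega
      rw [h, zpow_natCast, pow_mul, xx]
    have hprod : ∏ j ∈ Finset.Icc (k+1) (n/2), ((q:F)^(2*j)-1)/(q^(2*j-2*k)-1)
        = ∏ i ∈ Finset.Ioc K M, ((xx:F)^i - 1)/(xx^(i-K) - 1) := by
      refine Finset.prod_nbij' (fun j => j.toNat) (fun i => (i:ℤ)) ?_ ?_ ?_ ?_ ?_
      · intro a ha; simp only [Finset.mem_Icc] at ha; simp only [Finset.mem_Ioc]; omega
      · intro a ha; simp only [Finset.mem_Ioc] at ha; simp only [Finset.mem_Icc]; omega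
      · intro a ha; simp only [Finset.mem_Icc] at ha
        show ((a.toNat : ℤ)) = a; omega
      · intro a ha; show (((a:ℤ)).toNat) = a; omega
      · intro a ha
        simp only [Finset.mem_Icc] at ha
        have h1 : (q:F)^(2*a) = xx ^ a.toNat := hq2 a (by omega)
        have h2 : (q:F)^(2*a-2*k) = xx ^ (a.toNat - K) := by
          have : 2*a - 2*k = 2*(a-k) := by ring
          rw [this, hq2 (a-k) (by omega)]
          congr 1; omega
        rw [h1, h2]
    have hnum : ∏ i ∈ Finset.Ioc K M, ((xx:F)^i - 1) = fac M / fac K := by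
      rw [eq_div_iff (fac_ne_zero K), mul_comm]
      exact Finset.prod_Ioc_consecutive _ (Nat.zero_le K) hKM
    have hden : ∏ i ∈ Finset.Ioc K M, ((xx:F)^(i-K) - 1) = fac (M-K) := by
      have hIoc : Finset.Ioc K M = (Finset.Ioc 0 (M-K)).map (addRightEmbedding K) := by
        rw [Finset.map_add_right_Ioc]; congr 1 <;> omega
      rw [hIoc, Finset.prod_map, fac]
      apply Finset.prod_congr rfl
      intro j hj
      simp
    have hgp : Polynomial.aeval (q:F) (gp2 M K) = fac M / (fac K * fac (M-K)) := by
      rw [eq_div_iff (mul_ne_zero (fac_ne_zero K) (fac_ne_zero (M-K)))]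
      exact key_s18 M K hKM
    rw [hzT, hgeom, hprod, Finset.prod_div_distrib, hnum, hden, hgp]
    rw [div_div]
end
end
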